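/- arXiv:math/0604051 — 2 statements merged into one kernel-verified Lean document; each statement's English description precedes it below -/
import Mathlib

section
/- Let G be a topological group and π an orthogonal representation of G on a real Hilbert space H. Suppose π admits a 1-cocycle b whose image b(G) is enveloping in H, i.e., the closed convex hull of {b(g) : g ∈ G} is all of H. Then π is strongly cohomological. -/
/-- An orthogonal representation `π` of a topological group `G` on a real Hilbert space is
*strongly cohomological* if every nonzero closed invariant subspace `W` carries a continuous
1-cocycle (for the restricted representation) which is not a coboundary. -/
def IsStronglyCohomological {G : Type*} [Group G] [TopologicalSpace G]
    {H : Type*} [NormedAddCommGroup H] [InnerProductSpace ℝ H] [CompleteSpace H]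
    (π : G →* (H ≃ₗᵢ[ℝ] H)) : Prop :=
  ∀ W : Submodule ℝ H, IsClosed (W : Set H) → (∀ g : G, ∀ v ∈ W, π g v ∈ W) → W ≠ ⊥ →
    ∃ b : G → H, Continuous b ∧ (∀ g, b g ∈ W) ∧
      (∀ g h : G, b (g * h) = π g (b h) + b g) ∧
      ¬ ∃ v ∈ W, ∀ g : G, b g = π g v - v

/-- An orthogonal representation admitting a 1-cocycle with enveloping image
(i.e. the closed convex hull of the image is the whole space) is strongly cohomological. -/
theorem stronglyCohomological_of_enveloping_cocycle
    {G : Type*} [Group G] [TopologicalSpace G] [IsTopologicalGroup G]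
    {H : Type*} [NormedAddCommGroup H] [InnerProductSpace ℝ H] [CompleteSpace H]
    (π : G →* (H ≃ₗᵢ[ℝ] H)) (hπcont : ∀ v : H, Continuous fun g => π g v)
    (b : G → H) (hbcont : Continuous b)
    (hb : ∀ g h : G, b (g * h) = π g (b h) + b g)
    (henv : closure (convexHull ℝ (Set.range b)) = Set.univ) :
    IsStronglyCohomological π := by
  intro W hWclosed hWinv hWne
  haveI : CompleteSpace W := hWclosed.completeSpace_coe
  set P : H →L[ℝ] H := W.subtypeL.comp (W.orthogonalProjection) with hP
  have hPmem : ∀ x, P x ∈ W := fun x => (W.orthogonalProjection x).2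
  have horth : ∀ x : H, x - P x ∈ Wᗮ := fun x =>
    W.sub_starProjection_mem_orthogonal x
  -- π g maps Wᗮ to itself
  have hπinv : ∀ g : G, ∀ w, π g ((π g⁻¹ : H ≃ₗᵢ[ℝ] H) w) = w := by
    intro g w
    simp
  have hperp : ∀ g : G, ∀ x ∈ Wᗮ, π g x ∈ Wᗮ := by
    intro g x hx
    rw [Submodule.mem_orthogonal]
    intro u hu
    have hu' : (π g⁻¹ : H ≃ₗᵢ[ℝ] H) u ∈ W := hWinv g⁻¹ u hu
    have h2 := (π g).inner_map_map ((π g⁻¹ : H ≃ₗᵢ[ℝ] H) u) x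
    rw [hπinv g u] at h2
    rw [h2]
    exact hx _ hu'
  -- P commutes with π g
  have hcomm : ∀ g : G, ∀ x : H, P (π g x) = π g (P x) := by
    intro g x
    have h1 : (π g : H → H) (P x) ∈ W := hWinv g _ (hPmem x)
    have h2 : π g x - π g (P x) ∈ Wᗮ := by
      have : π g x - π g (P x) = π g (x - P x) := by
        simp [map_sub]
      rw [this]
      exact hperp g _ (horth x)
    have := Submodule.eq_starProjection_of_mem_orthogonal (K := W) h1 h2
    exact this
  refine ⟨fun g => P (b g), P.continuous.comp hbcont, fun g => hPmem _, ?_, ?_⟩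
  · intro g h
    show P (b (g * h)) = π g (P (b h)) + P (b g)
    rw [hb g h, map_add, hcomm g (b h)]
  · rintro ⟨v, hvW, hv⟩
    have hv' : ∀ g : G, P (b g) = π g v - v := hv
    obtain ⟨w, hwW, hw0⟩ := Submodule.exists_mem_ne_zero_of_ne_bot hWne
    set M : ℝ := 2 * ‖v‖ * ‖w‖ with hM
    have hbound : ∀ g : G, inner ℝ (b g) w ≤ M := by
      intro g
      have hsplit : (inner ℝ (b g) w : ℝ) = inner ℝ (P (b g)) w := by
        have h0 : (inner ℝ (b g - P (b g)) w : ℝ) = 0 := by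
          rw [real_inner_comm]
          exact (horth (b g)) w hwW  -- membership in Wᗮ gives ⟪w', u⟫ = 0?
        have := inner_sub_left (𝕜 := ℝ) (b g) (P (b g)) w
        linarith [this, h0]
      rw [hsplit, hv' g, inner_sub_left]
      have h1 : (inner ℝ ((π g : H → H) v) w : ℝ) ≤ ‖v‖ * ‖w‖ := by
        calc (inner ℝ ((π g : H → H) v) w : ℝ) ≤ ‖(π g : H → H) v‖ * ‖w‖ :=
              real_inner_le_norm _ _
          _ = ‖v‖ * ‖w‖ := by rw [(π g).norm_map]
      have h2 : -(inner ℝ v w : ℝ) ≤ ‖v‖ * ‖w‖ := by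
        have := real_inner_le_norm (-v) w
        simpa [inner_neg_left] using this
      rw [hM]; linarith
    set S : Set H := {x | inner ℝ x w ≤ M} with hS
    have hSconv : Convex ℝ S := by
      apply convex_halfSpace_le
      exact ⟨fun a c => inner_add_left a c w, fun r x => real_inner_smul_left x w r⟩
    have hSclosed : IsClosed S :=
      isClosed_le (Continuous.inner continuous_id continuous_const) continuous_const
    have hsub : closure (convexHull ℝ (Set.range b)) ⊆ S := by
      apply closure_minimal _ hSclosed
      apply convexHull_min _ hSconv
      rintro _ ⟨g, rfl⟩
      exact hbound g
    rw [henv] at hsub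
    have hx : ((M + 1) / ‖w‖ ^ 2) • w ∈ S := hsub (Set.mem_univ _)
    have hw2 : ‖w‖ ^ 2 ≠ 0 := pow_ne_zero _ (norm_ne_zero_iff.mpr hw0)
    have : (inner ℝ (((M + 1) / ‖w‖ ^ 2) • w) w : ℝ) = M + 1 := by
      rw [real_inner_smul_left, real_inner_self_eq_norm_sq, div_mul_cancel₀ _ hw2]
    rw [hS] at hx
    simp only [Set.mem_setOf_eq] at hx
    rw [this] at hx
    linarith
end

section
/- Let G be a topological group with Property H_CT. Let (π, b) define a continuous affine isometric action α of G on a real Hilbert space H (α(g)x = π(g)x + b(g)), and let O = {α(g)x₀ : g ∈ G} be the orbit of a point x₀ ∈ H. Then there exist a subspace T of H contained in the subspace of π(G)-invariant vectors, and a closed, locally bounded convex subset U of the orthogonal complement T⊥, such that O ⊆ {t + u : t ∈ T, u ∈ U}. -/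
universe u v

open Filter Topology

/-- A topological group `G` has *Property `H_CT`* if every strongly cohomological orthogonal
representation of `G` (on any real Hilbert space) is trivial. -/
def PropertyHCT.{w, v₂} (G : Type v₂) [Group G] [TopologicalSpace G] : Prop :=
  ∀ (H : Type w) [NormedAddCommGroup H] [InnerProductSpace ℝ H] [CompleteSpace H]
    (π : G →* (H ≃ₗᵢ[ℝ] H)), (∀ v : H, Continuous fun g => π g v) →
    IsStronglyCohomological π → ∀ g : G, ∀ v : H, π g v = v

/-- Ray extension: in a closed convex set, a ray from one point gives rays from all points. -/
lemma aux_ray_extend {H : Type*} [NormedAddCommGroup H] [NormedSpace ℝ H] {C : Set H}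
    (hC : Convex ℝ C) (hCc : IsClosed C) {x e : H} (hx : ∀ t : ℝ, 0 ≤ t → x + t • e ∈ C)
    {y : H} (hy : y ∈ C) : ∀ t : ℝ, 0 ≤ t → y + t • e ∈ C := by
  intro t ht
  have key : ∀ n : ℕ, (1 - 1/(n+1 : ℝ)) • y + (1/(n+1 : ℝ)) • x + t • e ∈ C := by
    intro n
    have hε : (0:ℝ) < 1/(n+1 : ℝ) := by positivity
    have h1 : (1 - 1/(n+1 : ℝ)) + 1/(n+1 : ℝ) = 1 := by ring
    have hmem := hC hy (hx ((n+1 : ℝ) * t) (by positivity))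
      (by
        have : (1/(n+1 : ℝ)) ≤ 1 := by
          rw [div_le_one (by positivity)]; linarith [Nat.cast_nonneg (α := ℝ) n]
        linarith) hε.le h1
    have : (1 - 1/(n+1 : ℝ)) • y + (1/(n+1 : ℝ)) • (x + ((n+1 : ℝ) * t) • e)
        = (1 - 1/(n+1 : ℝ)) • y + (1/(n+1 : ℝ)) • x + t • e := by
      rw [smul_add, smul_smul, add_assoc]
      congr 2
      congr 1
      field_simp
    rwa [this] at hmem
  have hlim : Tendsto (fun n : ℕ => (1 - 1/(n+1 : ℝ)) • y + (1/(n+1 : ℝ)) • x + t • e)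
      atTop (𝓝 (y + t • e)) := by
    have h0 : Tendsto (fun n : ℕ => 1/(n+1 : ℝ)) atTop (𝓝 0) :=
      tendsto_one_div_add_atTop_nhds_zero_nat
    have : Tendsto (fun ε : ℝ => (1 - ε) • y + ε • x + t • e) (𝓝 0) (𝓝 (y + t • e)) := by
      have hcont : Continuous fun ε : ℝ => (1 - ε) • y + ε • x + t • e := by continuity
      have := hcont.tendsto 0
      simpa using this
    exact this.comp h0
  exact hCc.mem_of_tendsto hlim (Filter.Eventually.of_forall key)

/-- If a closed convex set has unbounded intersection with a finite-dimensional subspace,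
it contains a ray. -/
lemma aux_exists_ray {H : Type*} [NormedAddCommGroup H] [NormedSpace ℝ H] {C : Set H}
    (hC : Convex ℝ C) (hCc : IsClosed C) (V : Submodule ℝ H) (hV : FiniteDimensional ℝ V)
    (hub : ¬ Bornology.IsBounded (C ∩ (V : Set H))) :
    ∃ x ∈ C, ∃ e : H, e ≠ 0 ∧ ∀ t : ℝ, 0 ≤ t → x + t • e ∈ C := by
  rw [isBounded_iff_forall_norm_le] at hub
  push_neg at hub
  obtain ⟨x, hxCV, -⟩ := hub 0
  have hseq : ∀ n : ℕ, ∃ z ∈ C ∩ (V : Set H), ‖x‖ + n + 1 < ‖z‖ := by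
    intro n
    obtain ⟨z, hz, hz'⟩ := hub (‖x‖ + n + 1)
    exact ⟨z, hz, hz'⟩
  choose z hz hznorm using hseq
  have hxV : x ∈ V := hxCV.2
  have hL : ∀ n, (0:ℝ) < ‖z n - x‖ := by
    intro n
    have h1 : ‖x‖ + n + 1 < ‖z n‖ := hznorm n
    have h2 : ‖z n‖ - ‖x‖ ≤ ‖z n - x‖ := norm_sub_norm_le _ _
    have : (0:ℝ) ≤ (n:ℝ) := Nat.cast_nonneg n
    linarith
  have hLn : ∀ n : ℕ, (n:ℝ) < ‖z n - x‖ := by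
    intro n
    have h1 : ‖x‖ + n + 1 < ‖z n‖ := hznorm n
    have h2 : ‖z n‖ - ‖x‖ ≤ ‖z n - x‖ := norm_sub_norm_le _ _
    linarith
  set d : ℕ → V := fun n => (‖z n - x‖)⁻¹ • (⟨z n - x, V.sub_mem (hz n).2 hxV⟩ : V) with hd
  have hdnorm : ∀ n, ‖d n‖ = 1 := by
    intro n
    have : ‖(⟨z n - x, V.sub_mem (hz n).2 hxV⟩ : V)‖ = ‖z n - x‖ := rfl
    rw [hd]
    simp only [norm_smul, norm_inv, norm_norm, this]
    field_simp [(hL n).ne']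
  have hdsphere : ∀ n, d n ∈ Metric.sphere (0:V) 1 := by
    intro n; simpa [Metric.mem_sphere, dist_eq_norm] using hdnorm n
  have hcpt : IsCompact (Metric.sphere (0:V) 1) := isCompact_sphere 0 1
  obtain ⟨e', he'mem, φ, hφ, hconv⟩ := hcpt.tendsto_subseq hdsphere
  have he'norm : ‖e'‖ = 1 := by simpa [Metric.mem_sphere, dist_eq_norm] using he'mem
  refine ⟨x, hxCV.1, (e' : H), ?_, ?_⟩
  · intro h
    have : e' = 0 := by exact_mod_cast Subtype.ext h
    rw [this] at he'norm; simp at he'norm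
  · intro t ht
    have hmem : ∀ᶠ n in atTop, x + t • ((d (φ n) : H)) ∈ C := by
      filter_upwards [eventually_ge_atTop (Nat.ceil t)] with n hn
      have htL : t ≤ ‖z (φ n) - x‖ := by
        have h1 : (φ n : ℝ) < ‖z (φ n) - x‖ := hLn (φ n)
        have h2 : (n : ℝ) ≤ (φ n : ℝ) := by exact_mod_cast hφ.id_le n
        have h3 : t ≤ (n : ℝ) := by
          calc t ≤ (Nat.ceil t : ℝ) := Nat.le_ceil t
          _ ≤ (n : ℝ) := by exact_mod_cast hn
        linarith
      set L := ‖z (φ n) - x‖ with hLdef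
      have hL0 : (0:ℝ) < L := hL (φ n)
      have hcomb := hC hxCV.1 (hz (φ n)).1 (a := 1 - t / L) (b := t / L)
        (by
          have : t / L ≤ 1 := by rw [div_le_one hL0]; exact htL
          linarith)
        (by positivity) (by ring)
      have heq : (1 - t / L) • x + (t / L) • z (φ n) = x + t • ((d (φ n) : H)) := by
        have hdval : ((d (φ n) : H)) = L⁻¹ • (z (φ n) - x) := rfl
        rw [hdval, smul_smul, sub_smul, one_smul, smul_sub]
        have : t * L⁻¹ = t / L := by ring
        rw [this]
        abel
      rwa [heq] at hcomb
    have hlim : Tendsto (fun n => x + t • ((d (φ n) : H))) atTop (𝓝 (x + t • (e' : H))) := by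
      have hcoe : Tendsto (fun n => ((d (φ n) : H))) atTop (𝓝 (e' : H)) :=
        ((continuous_subtype_val.tendsto e').comp hconv)
      exact (tendsto_const_nhds.add (hcoe.const_smul t))
    exact hCc.mem_of_tendsto hlim hmem

/-- Convex-combination rearrangement. -/
lemma aux_comb {E : Type*} [AddCommGroup E] [Module ℝ E] {a b : ℝ} (hab : a + b = 1)
    (p q v : E) : (a • p + b • q) + v = a • (p + v) + b • (q + v) := by
  have h : a • v + b • v = v := by rw [← add_smul, hab, one_smul]
  rw [smul_add, smul_add]
  conv_lhs => rw [← h]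
  abel

/-- Orthogonal projection onto an invariant subspace commutes with the isometry. -/
lemma aux_proj_comm {H : Type*} [NormedAddCommGroup H] [InnerProductSpace ℝ H]
    (K : Submodule ℝ H) [K.HasOrthogonalProjection] (f : H ≃ₗᵢ[ℝ] H)
    (hf : ∀ v ∈ K, f v ∈ K) (hf' : ∀ v ∈ K, f.symm v ∈ K) (x : H) :
    (Submodule.orthogonalProjectionOnto K (f x) : H) = f (Submodule.orthogonalProjectionOnto K x) := by
  apply Submodule.eq_starProjection_of_mem_of_inner_eq_zero
    (hf _ (Submodule.orthogonalProjectionOnto K x).2)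
  intro w hw
  have h1 : f x - f (Submodule.orthogonalProjectionOnto K x) = f (x - Submodule.orthogonalProjectionOnto K x) := by
    rw [map_sub]
  rw [h1, ← f.apply_symm_apply w, f.inner_map_map]
  exact Submodule.starProjection_inner_eq_zero x _ (hf' w hw)

/-- Restriction of an orthogonal representation to an invariant subspace. -/
noncomputable def restrictRep {G : Type*} [Group G] {H : Type*} [NormedAddCommGroup H]
    [InnerProductSpace ℝ H] (π : G →* (H ≃ₗᵢ[ℝ] H)) (M : Submodule ℝ H)
    (hinv : ∀ g : G, ∀ v ∈ M, π g v ∈ M) : G →* (M ≃ₗᵢ[ℝ] M) where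
  toFun g :=
    { toFun := fun v => ⟨π g v, hinv g v v.2⟩
      invFun := fun v => ⟨π g⁻¹ v, hinv g⁻¹ v v.2⟩
      map_add' := fun u v => by ext; simp
      map_smul' := fun c v => by ext; simp
      left_inv := fun v => by
        ext
        show π g⁻¹ (π g v) = v
        have : π g⁻¹ (π g v) = (π g⁻¹ * π g) (v : H) := rfl
        rw [this, ← map_mul, inv_mul_cancel, map_one]
        rfl
      right_inv := fun v => by
        ext
        show π g (π g⁻¹ v) = v
        have : π g (π g⁻¹ v) = (π g * π g⁻¹) (v : H) := rfl
        rw [this, ← map_mul, mul_inv_cancel, map_one]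
        rfl
      norm_map' := fun v => by
        show ‖π g v‖ = ‖(v : H)‖
        exact (π g).norm_map v }
  map_one' := by
    ext v
    show π 1 (v : H) = v
    rw [map_one]; rfl
  map_mul' g h := by
    ext v
    show π (g * h) (v : H) = π g (π h v)
    rw [map_mul]; rfl

/-- The orthogonal complement of an invariant subspace is invariant. -/
lemma aux_orth_inv {G : Type*} [Group G] {H : Type*} [NormedAddCommGroup H]
    [InnerProductSpace ℝ H] (π : G →* (H ≃ₗᵢ[ℝ] H)) (K : Submodule ℝ H)
    (hK : ∀ g : G, ∀ v ∈ K, π g v ∈ K) :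
    ∀ g : G, ∀ w ∈ Kᗮ, π g w ∈ Kᗮ := by
  intro g w hw
  rw [Submodule.mem_orthogonal]
  intro v hv
  have hv' : π g (π g⁻¹ v) = v := by
    have : π g (π g⁻¹ v) = (π g * π g⁻¹) v := rfl
    rw [this, ← map_mul, mul_inv_cancel, map_one]
    rfl
  rw [← hv', (π g).inner_map_map]
  exact hw _ (hK g⁻¹ v hv)

/-- Every orbit of a continuous affine isometric action of a group with
Property `H_CT` on a real Hilbert space is contained in `T × U`, with `T` a subspace of
invariant vectors and `U` a closed, locally bounded convex subset of `Tᗮ`. -/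
theorem orbit_subset_translation_prod_locallyBounded_of_HCT
    {G : Type v} [Group G] [TopologicalSpace G] [IsTopologicalGroup G]
    (hct : PropertyHCT.{u} G)
    {H : Type u} [NormedAddCommGroup H] [InnerProductSpace ℝ H] [CompleteSpace H]
    (π : G →* (H ≃ₗᵢ[ℝ] H)) (hπcont : ∀ v : H, Continuous fun g => π g v)
    (b : G → H) (hbcont : Continuous b)
    (hb : ∀ g h : G, b (g * h) = π g (b h) + b g)
    (x₀ : H) :
    ∃ T : Submodule ℝ H,
      (∀ g : G, ∀ v ∈ T, π g v = v) ∧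
      ∃ U : Set H, U ⊆ (Tᗮ : Set H) ∧ IsClosed U ∧ Convex ℝ U ∧
        (∀ V : Submodule ℝ H, FiniteDimensional ℝ V →
          Bornology.IsBounded (U ∩ (V : Set H))) ∧
        ∀ g : G, ∃ t ∈ T, ∃ u ∈ U, π g x₀ + b g = t + u := by
  classical
  -- basic group computation helpers
  have πmulv : ∀ (g h : G) (v : H), π g (π h v) = π (g * h) v := by
    intro g h v
    rw [map_mul]; rfl
  have πinvv : ∀ (g : G) (v : H), π g (π g⁻¹ v) = v := by
    intro g v
    rw [πmulv, mul_inv_cancel, map_one]; rfl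
  have πsymm : ∀ (g : G) (v : H), (π g).symm v = π g⁻¹ v := by
    intro g v
    rw [map_inv]; rfl
  -- the subspace of invariant vectors
  set T : Submodule ℝ H :=
    { carrier := {v : H | ∀ g : G, π g v = v}
      add_mem' := fun ha hb g => by rw [map_add, ha g, hb g]
      zero_mem' := fun g => map_zero (π g)
      smul_mem' := fun c v hv g => by rw [map_smul, hv g] } with hTdef
  have hmemT : ∀ v : H, v ∈ T ↔ ∀ g : G, π g v = v := fun v => Iff.rfl
  have hTclosed : IsClosed (T : Set H) := by
    have hset : (T : Set H) = ⋂ g : G, {v : H | π g v = v} := by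
      ext v
      constructor
      · intro hv
        exact Set.mem_iInter.mpr fun g => hv g
      · intro hv g
        exact Set.mem_iInter.mp hv g
    rw [hset]
    exact isClosed_iInter fun g => isClosed_eq (π g).continuous continuous_id
  haveI : CompleteSpace T := hTclosed.completeSpace_coe
  have hTinv : ∀ g : G, ∀ v ∈ T, π g v ∈ T := by
    intro g v hv
    intro h
    rw [hv g, hv h]
  set W : Submodule ℝ H := Tᗮ with hWdef
  have hWclosed : IsClosed (W : Set H) := Submodule.isClosed_orthogonal T
  haveI : CompleteSpace W := hWclosed.completeSpace_coe
  have hWinv : ∀ g : G, ∀ v ∈ W, π g v ∈ W := aux_orth_inv π T hTinv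
  have hWsymm : ∀ g : G, ∀ v ∈ W, (π g).symm v ∈ W := by
    intro g v hv
    rw [πsymm]
    exact hWinv g⁻¹ v hv
  -- W-component of the orbit
  set o : G → H := fun g => (Submodule.orthogonalProjectionOnto W (π g x₀ + b g) : H) with hodef
  set U : Set H := closure (convexHull ℝ (Set.range o)) with hUdef
  have hoW : ∀ g, o g ∈ W := fun g => (Submodule.orthogonalProjectionOnto W (π g x₀ + b g)).2
  have hUW : U ⊆ (W : Set H) :=
    closure_minimal (convexHull_min (by rintro _ ⟨g, rfl⟩; exact hoW g) W.convex) hWclosed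
  have hUclosed : IsClosed U := isClosed_closure
  have hUconvex : Convex ℝ U := (convex_convexHull ℝ _).closure
  have hoU : ∀ g, o g ∈ U := fun g =>
    subset_closure (subset_convexHull ℝ _ (Set.mem_range_self g))
  -- the affine action on the W-component preserves U
  have hPW : ∀ (g : G) (x : H),
      (Submodule.orthogonalProjectionOnto W (π g x) : H) = π g (Submodule.orthogonalProjectionOnto W x) :=
    fun g x => aux_proj_comm W (π g) (hWinv g) (hWsymm g) x
  have hPWadd : ∀ x y : H, (Submodule.orthogonalProjectionOnto W (x + y) : H)
      = (Submodule.orthogonalProjectionOnto W x : H) + (Submodule.orthogonalProjectionOnto W y : H) := by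
    intro x y
    rw [map_add]; rfl
  have hoact : ∀ g h : G, π g (o h) + (Submodule.orthogonalProjectionOnto W (b g) : H) = o (g * h) := by
    intro g h
    have harg : π (g * h) x₀ + b (g * h) = π g (π h x₀ + b h) + b g := by
      rw [hb g h, ← πmulv g h x₀, map_add]
      abel
    show π g ((Submodule.orthogonalProjectionOnto W (π h x₀ + b h) : H))
        + (Submodule.orthogonalProjectionOnto W (b g) : H)
      = (Submodule.orthogonalProjectionOnto W (π (g * h) x₀ + b (g * h)) : H)
    rw [harg]
    conv_rhs => rw [hPWadd, hPW g]
  have hαU : ∀ g : G, ∀ x ∈ U, π g x + (Submodule.orthogonalProjectionOnto W (b g) : H) ∈ U := by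
    intro g
    set c : H := (Submodule.orthogonalProjectionOnto W (b g) : H) with hc
    set A : H → H := fun x => π g x + c with hA
    have hAcont : Continuous A := ((π g).continuous).add continuous_const
    have hApre_convex : Convex ℝ (A ⁻¹' U) := by
      intro x hx y hy a b' ha hb' hab
      show π g (a • x + b' • y) + c ∈ U
      have : π g (a • x + b' • y) + c = a • (π g x + c) + b' • (π g y + c) := by
        rw [map_add, map_smul, map_smul]
        exact aux_comb hab _ _ _
      rw [this]
      exact hUconvex hx hy ha hb' hab
    have hApre_closed : IsClosed (A ⁻¹' U) := hUclosed.preimage hAcont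
    have hrange : Set.range o ⊆ A ⁻¹' U := by
      rintro _ ⟨h, rfl⟩
      show π g (o h) + c ∈ U
      rw [hc, hoact g h]
      exact hoU _
    intro x hx
    exact closure_minimal (convexHull_min hrange hApre_convex) hApre_closed hx
  -- recession directions
  set R : Set H := {e : H | ∀ x ∈ U, ∀ t : ℝ, 0 ≤ t → x + t • e ∈ U} with hRdef
  have hRW : R ⊆ (W : Set H) := by
    intro e he
    have h1 : o 1 + (1:ℝ) • e ∈ U := he (o 1) (hoU 1) 1 zero_le_one
    have h2 : o 1 + (1:ℝ) • e ∈ W := hUW h1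
    have := W.sub_mem h2 (hoW 1)
    simpa using this
  have hRinv : ∀ g : G, ∀ e ∈ R, π g e ∈ R := by
    intro g e he
    set c : H := (Submodule.orthogonalProjectionOnto W (b g) : H) with hc
    have hray : ∀ t : ℝ, 0 ≤ t → (π g (o 1) + c) + t • π g e ∈ U := by
      intro t ht
      have h1 : o 1 + t • e ∈ U := he (o 1) (hoU 1) t ht
      have h2 := hαU g _ h1
      have : π g (o 1 + t • e) + c = (π g (o 1) + c) + t • π g e := by
        rw [map_add, map_smul]
        abel
      rwa [this] at h2
    intro y hy t ht
    exact aux_ray_extend hUconvex hUclosed hray hy t ht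
  set M : Submodule ℝ H := (Submodule.span ℝ R).topologicalClosure with hMdef
  have hMW : M ≤ W :=
    Submodule.topologicalClosure_minimal _ (Submodule.span_le.mpr hRW) hWclosed
  have hMclosed : IsClosed (M : Set H) := Submodule.isClosed_topologicalClosure _
  haveI : CompleteSpace M := hMclosed.completeSpace_coe
  have hspaninv : ∀ g : G, ∀ v ∈ Submodule.span ℝ R, π g v ∈ Submodule.span ℝ R := by
    intro g v hv
    induction hv using Submodule.span_induction with
    | mem x hx => exact Submodule.subset_span (hRinv g x hx)
    | zero => rw [map_zero]; exact Submodule.zero_mem _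
    | add x y _ _ hx hy => rw [map_add]; exact Submodule.add_mem _ hx hy
    | smul c x _ hx => rw [map_smul]; exact Submodule.smul_mem _ c hx
  have hMinv : ∀ g : G, ∀ v ∈ M, π g v ∈ M := by
    intro g v hv
    have hv' : v ∈ closure (Submodule.span ℝ R : Set H) := hv
    have h1 : π g v ∈ π g '' closure (Submodule.span ℝ R : Set H) :=
      Set.mem_image_of_mem _ hv'
    have h2 := image_closure_subset_closure_image (f := π g) (π g).continuous h1
    have h3 : (π g) '' (Submodule.span ℝ R : Set H) ⊆ (Submodule.span ℝ R : Set H) := by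
      rintro _ ⟨w, hw, rfl⟩
      exact hspaninv g w hw
    exact closure_mono h3 h2
  set πM : G →* (M ≃ₗᵢ[ℝ] M) := restrictRep π M hMinv with hπM
  have hπMcont : ∀ v : M, Continuous fun g => πM g v := by
    intro v
    apply Continuous.subtype_mk
    exact hπcont (v : H)
  -- main claim: all recession directions vanish
  have hR0 : ∀ e ∈ R, e = 0 := by
    intro e heR
    by_contra he0
    have heM : e ∈ M := Submodule.le_topologicalClosure _ (Submodule.subset_span heR)
    by_cases hSC : IsStronglyCohomological πM
    · -- strongly cohomological ⟹ trivial ⟹ M ⊆ T, contradiction with M ≤ W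
      have htriv := hct M πM hπMcont hSC
      have heT : e ∈ T := by
        intro g
        have := htriv g ⟨e, heM⟩
        exact congrArg Subtype.val this
      have heW : e ∈ W := hMW heM
      have : (inner ℝ e e : ℝ) = 0 := (Submodule.mem_orthogonal T e).mp heW e heT
      exact he0 (inner_self_eq_zero.mp this)
    · rw [IsStronglyCohomological] at hSC
      push_neg at hSC
      obtain ⟨N, hNclosed, hNinv, hNbot, hNcb⟩ := hSC
      set N' : Submodule ℝ H := N.map M.subtype with hN'def
      have hN'M : N' ≤ M := Submodule.map_subtype_le M N
      have hN'closed : IsClosed (N' : Set H) := by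
        have : (N' : Set H) = (Subtype.val : M → H) '' (N : Set M) := by
          ext x
          simp [hN'def, Submodule.mem_map]
        rw [this]
        exact (hMclosed.isClosedEmbedding_subtypeVal).isClosedMap _ hNclosed
      haveI : CompleteSpace N' := hN'closed.completeSpace_coe
      have hN'inv : ∀ g : G, ∀ v ∈ N', π g v ∈ N' := by
        intro g v hv
        rw [Submodule.mem_map] at hv ⊢
        obtain ⟨n, hn, rfl⟩ := hv
        exact ⟨πM g n, hNinv g n hn, rfl⟩
      have hN'symm : ∀ g : G, ∀ v ∈ N', (π g).symm v ∈ N' := by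
        intro g v hv
        rw [πsymm]
        exact hN'inv g⁻¹ v hv
      have hPN : ∀ (g : G) (x : H),
          (Submodule.orthogonalProjectionOnto N' (π g x) : H) = π g (Submodule.orthogonalProjectionOnto N' x) :=
        fun g x => aux_proj_comm N' (π g) (hN'inv g) (hN'symm g) x
      have hPadd : ∀ x y : H, (Submodule.orthogonalProjectionOnto N' (x + y) : H)
          = (Submodule.orthogonalProjectionOnto N' x : H) + (Submodule.orthogonalProjectionOnto N' y : H) := by
        intro x y
        rw [map_add]; rfl
      have hPsmul : ∀ (cc : ℝ) (x : H), (Submodule.orthogonalProjectionOnto N' (cc • x) : H)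
          = cc • (Submodule.orthogonalProjectionOnto N' x : H) := by
        intro cc x
        rw [map_smul]; rfl
      -- the projected cocycle
      have hbmemM : ∀ g : G, (Submodule.orthogonalProjectionOnto N' (b g) : H) ∈ M :=
        fun g => hN'M (Submodule.orthogonalProjectionOnto N' (b g)).2
      set b' : G → M := fun g => ⟨(Submodule.orthogonalProjectionOnto N' (b g) : H), hbmemM g⟩ with hb'def
      have hb'cont : Continuous b' := by
        apply Continuous.subtype_mk
        exact continuous_subtype_val.comp ((Submodule.orthogonalProjectionOnto N').continuous.comp hbcont)
      have hb'mem : ∀ g, b' g ∈ N := by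
        intro g
        have hmem : (Submodule.orthogonalProjectionOnto N' (b g) : H) ∈ N' :=
          (Submodule.orthogonalProjectionOnto N' (b g)).2
        rw [Submodule.mem_map] at hmem
        obtain ⟨n, hn, hval⟩ := hmem
        have : b' g = n := Subtype.ext (by rw [hb'def]; exact hval.symm)
        rw [this]
        exact hn
      have hb'cocycle : ∀ g h : G, b' (g * h) = πM g (b' h) + b' g := by
        intro g h
        apply Subtype.ext
        show (Submodule.orthogonalProjectionOnto N' (b (g * h)) : H)
          = π g (Submodule.orthogonalProjectionOnto N' (b h) : H) + (Submodule.orthogonalProjectionOnto N' (b g) : H)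
        rw [hb g h, hPadd, hPN g]
      obtain ⟨vM, hvN, hveq⟩ := hNcb b' hb'cont hb'mem hb'cocycle
      set v' : H := (vM : H) with hv'def
      have hv'eq : ∀ g : G, (Submodule.orthogonalProjectionOnto N' (b g) : H) = π g v' - v' := by
        intro g
        have := congrArg (Subtype.val : M → H) (hveq g)
        have h' : (Submodule.orthogonalProjectionOnto N' (b g) : H) = ((πM g vM : M) : H) - v' := by
          simpa [hb'def, hv'def] using this
        exact h'
      -- the orbit is contained in a "slab"
      set r : ℝ := ‖(Submodule.orthogonalProjectionOnto N' x₀ : H) + v'‖ with hrdef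
      have hN'W : N' ≤ W := le_trans hN'M hMW
      have hPo : ∀ g : G,
          (Submodule.orthogonalProjectionOnto N' (o g) : H) = (Submodule.orthogonalProjectionOnto N' (π g x₀ + b g) : H) := by
        intro g
        have hdmem : (π g x₀ + b g) - o g ∈ N'ᗮ := by
          have h1 : (π g x₀ + b g) - o g ∈ Wᗮ :=
            Submodule.sub_starProjection_mem_orthogonal (K := W) _
          exact Submodule.orthogonal_le hN'W h1
        have := Submodule.eq_starProjection_of_mem_orthogonal
          (K := N') (Submodule.orthogonalProjectionOnto N' (o g)).2
          (u := π g x₀ + b g) ?_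
        · exact this.symm
        · have h2 : (π g x₀ + b g) - (Submodule.orthogonalProjectionOnto N' (o g) : H)
              = ((π g x₀ + b g) - o g) + (o g - (Submodule.orthogonalProjectionOnto N' (o g) : H)) := by
            abel
          rw [h2]
          exact N'ᗮ.add_mem hdmem (Submodule.sub_starProjection_mem_orthogonal (K := N') _)
      have horbit : ∀ g : G, ‖(Submodule.orthogonalProjectionOnto N' (o g) : H) + v'‖ = r := by
        intro g
        rw [hPo g]
        have h1 : (Submodule.orthogonalProjectionOnto N' (π g x₀ + b g) : H)
            = π g ((Submodule.orthogonalProjectionOnto N' x₀ : H) + v') - v' := by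
          rw [hPadd, hPN g, hv'eq g, map_add]
          abel
        rw [h1]
        have h2 : π g ((Submodule.orthogonalProjectionOnto N' x₀ : H) + v') - v' + v'
            = π g ((Submodule.orthogonalProjectionOnto N' x₀ : H) + v') := by abel
        rw [h2, (π g).norm_map]
      set S : Set H := {x : H | ‖(Submodule.orthogonalProjectionOnto N' x : H) + v'‖ ≤ r} with hSdef
      have hSconvex : Convex ℝ S := by
        intro x hx y hy a bb ha hbb hab
        show ‖(Submodule.orthogonalProjectionOnto N' (a • x + bb • y) : H) + v'‖ ≤ r
        have hsplit : (Submodule.orthogonalProjectionOnto N' (a • x + bb • y) : H) + v'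
            = a • ((Submodule.orthogonalProjectionOnto N' x : H) + v')
              + bb • ((Submodule.orthogonalProjectionOnto N' y : H) + v') := by
          rw [hPadd, hPsmul, hPsmul]
          exact aux_comb hab _ _ _
        rw [hsplit]
        calc ‖a • ((Submodule.orthogonalProjectionOnto N' x : H) + v')
              + bb • ((Submodule.orthogonalProjectionOnto N' y : H) + v')‖
            ≤ ‖a • ((Submodule.orthogonalProjectionOnto N' x : H) + v')‖
              + ‖bb • ((Submodule.orthogonalProjectionOnto N' y : H) + v')‖ := norm_add_le _ _
          _ = a * ‖(Submodule.orthogonalProjectionOnto N' x : H) + v'‖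
              + bb * ‖(Submodule.orthogonalProjectionOnto N' y : H) + v'‖ := by
              rw [norm_smul, norm_smul, Real.norm_of_nonneg ha, Real.norm_of_nonneg hbb]
          _ ≤ a * r + bb * r := by
              apply add_le_add
              · exact mul_le_mul_of_nonneg_left hx ha
              · exact mul_le_mul_of_nonneg_left hy hbb
          _ = r := by rw [← add_mul, hab, one_mul]
      have hScont : Continuous fun x : H => ‖(Submodule.orthogonalProjectionOnto N' x : H) + v'‖ :=
        ((continuous_subtype_val.comp (Submodule.orthogonalProjectionOnto N').continuous).add
          continuous_const).norm
      have hSclosed : IsClosed S := isClosed_le hScont continuous_const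
      have hUS : U ⊆ S := by
        apply closure_minimal (convexHull_min ?_ hSconvex) hSclosed
        rintro _ ⟨g, rfl⟩
        show ‖(Submodule.orthogonalProjectionOnto N' (o g) : H) + v'‖ ≤ r
        rw [horbit g]
      -- recession directions are killed by the projection onto N'
      have hPe : ∀ e'' ∈ R, (Submodule.orthogonalProjectionOnto N' e'' : H) = 0 := by
        intro e'' he''
        by_contra hne
        set w : H := (Submodule.orthogonalProjectionOnto N' e'' : H) with hw
        set u₀ : H := (Submodule.orthogonalProjectionOnto N' (o 1) : H) + v' with hu₀
        have hwn : (0:ℝ) < ‖w‖ := norm_pos_iff.mpr hne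
        set t : ℝ := (r + ‖u₀‖ + 1) / ‖w‖ with htdef
        have hr0 : (0:ℝ) ≤ r := norm_nonneg _
        have ht0 : 0 ≤ t := by positivity
        have hmem : o 1 + t • e'' ∈ U := he'' (o 1) (hoU 1) t ht0
        have hmemS : o 1 + t • e'' ∈ S := hUS hmem
        have hcalc : (Submodule.orthogonalProjectionOnto N' (o 1 + t • e'') : H) + v' = u₀ + t • w := by
          rw [hPadd, hPsmul, hu₀, hw]
          abel
        rw [hSdef] at hmemS
        have hle : ‖u₀ + t • w‖ ≤ r := by
          have := hmemS
          rw [Set.mem_setOf_eq, hcalc] at this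
          exact this
        have hbig : r + 1 ≤ ‖u₀ + t • w‖ := by
          have h1 : ‖t • w‖ ≤ ‖u₀ + t • w‖ + ‖u₀‖ := by
            calc ‖t • w‖ = ‖(u₀ + t • w) - u₀‖ := by congr 1; abel
            _ ≤ ‖u₀ + t • w‖ + ‖u₀‖ := norm_sub_le _ _
          have h2 : ‖t • w‖ = r + ‖u₀‖ + 1 := by
            rw [norm_smul, Real.norm_of_nonneg ht0, htdef, div_mul_cancel₀ _ hwn.ne']
          linarith
        linarith
      have hRN' : R ⊆ (N'ᗮ : Set H) := by
        intro e'' he''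
        have h1 : e'' - (Submodule.orthogonalProjectionOnto N' e'' : H) ∈ N'ᗮ :=
          Submodule.sub_starProjection_mem_orthogonal (K := N') e''
        rwa [hPe e'' he'', sub_zero] at h1
      have hMN' : M ≤ N'ᗮ :=
        Submodule.topologicalClosure_minimal _ (Submodule.span_le.mpr hRN')
          (Submodule.isClosed_orthogonal N')
      obtain ⟨n, hnN, hn0⟩ := Submodule.ne_bot_iff N |>.mp hNbot
      have hn' : (n : H) ∈ N' := Submodule.mem_map_of_mem hnN
      have hnM : (n : H) ∈ M := n.2
      have : (inner ℝ ((n : H)) ((n : H)) : ℝ) = 0 :=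
        (Submodule.mem_orthogonal N' (n : H)).mp (hMN' hnM) _ hn'
      have : (n : H) = 0 := inner_self_eq_zero.mp this
      exact hn0 (Subtype.ext this)
  -- assemble the answer
  refine ⟨T, fun g v hv => hv g, U, hUW, hUclosed, hUconvex, ?_, ?_⟩
  · intro V hV
    by_contra hub
    obtain ⟨x, hxU, e, he0, hray⟩ := aux_exists_ray hUconvex hUclosed V hV hub
    have heR : e ∈ R := by
      intro y hy t ht
      exact aux_ray_extend hUconvex hUclosed hray hy t ht
    exact he0 (hR0 e heR)
  · intro g
    refine ⟨(π g x₀ + b g) - o g, ?_, o g, hoU g, by abel⟩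
    have h1 : (π g x₀ + b g) - o g ∈ Wᗮ :=
      Submodule.sub_starProjection_mem_orthogonal (K := W) _
    rwa [hWdef, Submodule.orthogonal_orthogonal] at h1
end
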